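/- Let p be an odd prime, u ∈ 1 + pZ_p, n ≥ 1, and ζ a primitive p^m-th root of unity with m < n. Let ξ_n(x) = ((1+x)^{p^n} − 1)/((1+x)^{p^{n−1}} − 1). Then for any integer l ≠ 0, ξ_n(u^l ζ − 1)/p is a p-adic unit; moreover ξ_n(u^0·1 − 1)/p = ξ_n(0)/p = 1. -/

import Mathlib

open IsUltrametricDist Finset

/-- Powers of an element of the ball `‖x-1‖ ≤ ε` stay in the ball (ultrametric). -/
lemma aux_pow_ball {K : Type*} [NormedField K] [IsUltrametricDist K]
    {x : K} {ε : ℝ} (hε : ε ≤ 1) (hx : ‖x - 1‖ ≤ ε) (j : ℕ) : ‖x ^ j - 1‖ ≤ ε := by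
  have hx1 : ‖x‖ ≤ 1 := by
    have h := norm_add_le_max (x - 1) 1
    simpa using h.trans (max_le (hx.trans hε) norm_one.le)
  induction j with
  | zero => simpa using (norm_nonneg (x - 1)).trans hx
  | succ k ih =>
    have h : x ^ (k + 1) - 1 = x ^ k * (x - 1) + (x ^ k - 1) := by ring
    rw [h]
    refine (norm_add_le_max _ _).trans (max_le ?_ ih)
    rw [norm_mul]
    calc ‖x ^ k‖ * ‖x - 1‖ ≤ 1 * ε :=
          mul_le_mul (by simpa [norm_pow] using pow_le_one₀ (norm_nonneg x) hx1)
            hx (norm_nonneg _) zero_le_one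
      _ = ε := one_mul ε

/-- The key estimate: if `‖a-1‖ ≤ 1/p` with `p` an odd prime, then
`∑_{k<p} a^k = p + O(p²)`. -/
lemma aux_key {K : Type*} [NormedField K] [IsUltrametricDist K]
    (p : ℕ) (hp : p.Prime) (hodd : Odd p) (hpK : ‖(p : K)‖ = (p : ℝ)⁻¹)
    {a : K} (ha : ‖a - 1‖ ≤ (p : ℝ)⁻¹) :
    ‖(∑ k ∈ Finset.range p, a ^ k) - (p : K)‖ ≤ (p : ℝ)⁻¹ * (p : ℝ)⁻¹ := by
  have hp1 : (1 : ℝ) < p := by exact_mod_cast hp.one_lt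
  have hppos : (0 : ℝ) < (p : ℝ)⁻¹ := by positivity
  have hε : (p : ℝ)⁻¹ ≤ 1 := by rw [inv_le_one_iff₀]; right; exact hp1.le
  have key : (∑ k ∈ Finset.range p, a ^ k) - (p : K)
      = (a - 1) * ∑ k ∈ Finset.range p, ∑ i ∈ Finset.range k, a ^ i := by
    rw [Finset.mul_sum]
    have h : (p : K) = ∑ k ∈ Finset.range p, (1 : K) := by simp
    rw [h, ← Finset.sum_sub_distrib]
    refine Finset.sum_congr rfl fun k _ => ?_
    rw [mul_comm, geom_sum_mul]
  rw [key, norm_mul]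
  refine mul_le_mul ha ?_ (norm_nonneg _) (by positivity)
  -- split the double sum
  have hsplit : (∑ k ∈ Finset.range p, ∑ i ∈ Finset.range k, a ^ i)
      = (∑ k ∈ Finset.range p, ∑ i ∈ Finset.range k, (a ^ i - 1))
        + ∑ k ∈ Finset.range p, (k : K) := by
    rw [← Finset.sum_add_distrib]
    refine Finset.sum_congr rfl fun k _ => ?_
    rw [Finset.sum_sub_distrib]
    simp
  rw [hsplit]
  refine (norm_add_le_max _ _).trans (max_le ?_ ?_)
  · refine norm_sum_le_of_forall_le_of_nonneg (by positivity) fun k _ => ?_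
    exact norm_sum_le_of_forall_le_of_nonneg (by positivity)
      fun i _ => aux_pow_ball hε ha i
  · -- Gauss sum: ∑_{k<p} k = p * (p-1)/2, divisible by p since p is odd
    obtain ⟨q, hq⟩ := hodd
    have hgauss : (∑ k ∈ Finset.range p, k) = p * q := by
      have h2 := Finset.sum_range_id_mul_two p
      rw [show p - 1 = 2 * q from by omega, show p * (2 * q) = p * q * 2 from by ring] at h2
      omega
    have : (∑ k ∈ Finset.range p, (k : K)) = (p : K) * (q : K) := by
      rw [← Nat.cast_sum, hgauss, Nat.cast_mul]
    rw [this, norm_mul, hpK]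
    calc (p : ℝ)⁻¹ * ‖(q : K)‖ ≤ (p : ℝ)⁻¹ * 1 :=
          mul_le_mul_of_nonneg_left (norm_natCast_le_one K q) hppos.le
      _ = (p : ℝ)⁻¹ := mul_one _

theorem stmt2 (p : ℕ) (hp : p.Prime) (hodd : Odd p)
    (K : Type*) [NormedField K] [IsUltrametricDist K]
    (hpK : ‖(p : K)‖ = (p : ℝ)⁻¹)
    (u : Kˣ) (hu : ‖(u : K) - 1‖ ≤ (p : ℝ)⁻¹)
    (huro : ∀ k : ℤ, k ≠ 0 → (u : K) ^ k ≠ 1)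
    (n m : ℕ) (hn : 1 ≤ n) (hm : m < n)
    (ζ : K) (hζ : IsPrimitiveRoot ζ (p ^ m)) :
    (∀ l : ℤ, l ≠ 0 →
      ‖(∑ k ∈ Finset.range p, ((u : K) ^ l * ζ) ^ (k * p ^ (n - 1))) / (p : K)‖ = 1)
    ∧ (∑ k ∈ Finset.range p, ((1 : K)) ^ (k * p ^ (n - 1))) / (p : K) = 1 := by
  have hp1 : (1 : ℝ) < p := by exact_mod_cast hp.one_lt
  have hppos : (0 : ℝ) < (p : ℝ)⁻¹ := by positivity
  have hpK0 : (p : K) ≠ 0 := by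
    intro h; rw [h, norm_zero] at hpK; exact hppos.ne' hpK.symm
  have hε : (p : ℝ)⁻¹ ≤ 1 := by rw [inv_le_one_iff₀]; right; exact hp1.le
  have hεlt : (p : ℝ)⁻¹ < 1 := by rw [inv_lt_one_iff₀]; right; exact hp1
  constructor
  · intro l hl
    have hζpow : ζ ^ (p ^ (n - 1)) = 1 := by
      have h : p ^ (n - 1) = p ^ m * p ^ (n - 1 - m) := by
        rw [← pow_add]; congr 1; omega
      rw [h, pow_mul, hζ.pow_eq_one, one_pow]
    set a : K := (u : K) ^ (l * (p ^ (n - 1) : ℕ)) with ha_def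
    have hrw : ∀ k ∈ Finset.range p,
        ((u : K) ^ l * ζ) ^ (k * p ^ (n - 1)) = a ^ k := by
      intro k _
      rw [mul_comm k, pow_mul, mul_pow, ← zpow_natCast ((u:K)^l), ← zpow_mul, hζpow,
        mul_one, ha_def]
    rw [Finset.sum_congr rfl hrw]
    have hune : ‖(u : K) - 1‖ < 1 := hu.trans_lt hεlt
    have hu1 : ‖(u : K)‖ = 1 := by
      have h2 : ‖((u : K) - 1) + 1‖ = max ‖(u : K) - 1‖ ‖(1 : K)‖ :=
        norm_add_eq_max_of_norm_ne_norm (by rw [norm_one]; exact hune.ne)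
      have h3 : ((u : K) - 1) + 1 = (u : K) := by ring
      rw [h3, norm_one, max_eq_right hune.le] at h2
      exact h2
    have ha : ‖a - 1‖ ≤ (p : ℝ)⁻¹ := by
      rcases le_or_gt 0 (l * (p ^ (n - 1) : ℕ) : ℤ) with h | h
      · obtain ⟨j, hj⟩ := Int.eq_ofNat_of_zero_le h
        rw [ha_def, hj, zpow_natCast]
        exact aux_pow_ball hε hu j
      · obtain ⟨j, hj⟩ : ∃ j : ℕ, (l * (p ^ (n - 1) : ℕ) : ℤ) = -(j : ℤ) :=
          ⟨(-(l * (p ^ (n - 1) : ℕ))).toNat, by omega⟩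
        have hj' : a = ((u : K) ^ j)⁻¹ := by
          rw [ha_def, hj, zpow_neg, zpow_natCast]
        have huj : ‖(u : K) ^ j‖ = 1 := by rw [norm_pow, hu1, one_pow]
        have hujne : (u : K) ^ j ≠ 0 := by
          intro h0; rw [h0, norm_zero] at huj; simp at huj
        rw [hj']
        have heq : ((u : K) ^ j)⁻¹ - 1 = -(((u : K) ^ j - 1) * ((u : K) ^ j)⁻¹) := by
          field_simp
          ring
        rw [heq, norm_neg, norm_mul, norm_inv, huj, inv_one, mul_one]
        exact aux_pow_ball hε hu j
    have hkey := aux_key p hp hodd hpK ha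
    have hlt : (p : ℝ)⁻¹ * (p : ℝ)⁻¹ < (p : ℝ)⁻¹ := mul_lt_of_lt_one_left hppos hεlt
    set S := ∑ k ∈ Finset.range p, a ^ k with hS
    have hnormS : ‖S‖ = (p : ℝ)⁻¹ := by
      have h1 : S = (p : K) + (S - (p : K)) := by ring
      have hne : ‖(p : K)‖ ≠ ‖S - (p : K)‖ := by
        rw [hpK]
        exact fun h => absurd (h ▸ (hkey.trans_lt hlt)) (lt_irrefl _)
      have h2 : ‖(p : K) + (S - (p : K))‖ = max ‖(p : K)‖ ‖S - (p : K)‖ :=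
        norm_add_eq_max_of_norm_ne_norm hne
      rw [← h1] at h2
      rw [h2, hpK, max_eq_left (hkey.trans hlt.le)]
    rw [norm_div, hnormS, hpK, div_self hppos.ne']
  · have h : ∀ k ∈ Finset.range p, ((1 : K)) ^ (k * p ^ (n - 1)) = 1 := by
      intro k _; rw [one_pow]
    rw [Finset.sum_congr rfl h, Finset.sum_const, Finset.card_range, nsmul_eq_mul,
      mul_one, div_self hpK0]
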